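/- Let X be a topological space and (U_n)_{n∈ℕ} a sequence of nonempty open subsets of X. Then there exists an infinite set M ⊆ ℕ and nonempty open sets V_n ⊆ U_n for n ∈ M such that either the family {V_n : n ∈ M} is pairwise disjoint, or all V_n (n ∈ M) are equal to a single singleton set. -/

import Mathlib

open Set Filter Topology Function

/-- A free ultrafilter on ℕ: one containing no singleton. -/
def FreeUF (p : Ultrafilter ℕ) : Prop := ∀ n : ℕ, ({n} : Set ℕ) ∉ p

/-- `l` is the `p`-limit of the sequence `x`. -/
def PLim {X : Type*} [TopologicalSpace X] (p : Ultrafilter ℕ) (x : ℕ → X) (l : X) : Prop :=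
  Filter.Tendsto x (p : Filter ℕ) (nhds l)

/-- A βω-space: the closure of any countably infinite discrete subset with compact closure
is homeomorphic to βℕ. -/
def BetaOmegaSpace (X : Type*) [TopologicalSpace X] : Prop :=
  ∀ M : Set X, M.Countable → M.Infinite → DiscreteTopology M → IsCompact (closure M) →
    Nonempty (closure M ≃ₜ StoneCech ℕ)

/-- Keisler–Rudin (Rudin–Keisler) order on ultrafilters on ℕ. -/
def RKle (p q : Ultrafilter ℕ) : Prop := ∃ f : ℕ → ℕ, Ultrafilter.map f q = p

/-- A homogeneous space. -/
def Homogeneous (X : Type*) [TopologicalSpace X] : Prop :=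
  ∀ x y : X, ∃ h : X ≃ₜ X, h x = y


section Stmt1Aux

variable {X : Type*} [TopologicalSpace X] [T2Space X] [CompletelyRegularSpace X]

private lemma stmt1_sep_closure {x y : X} (h : x ≠ y) :
    ∃ V₁ V₂ : Set X, IsOpen V₁ ∧ IsOpen V₂ ∧ x ∈ V₁ ∧ y ∈ V₂ ∧
      closure V₁ ∩ closure V₂ = ∅ := by
  obtain ⟨O₁, O₂, hO₁, hO₂, hx, hy, hd⟩ := t2_separation h
  obtain ⟨C₁, hC₁n, hC₁c, hC₁s⟩ := exists_mem_nhds_isClosed_subset (hO₁.mem_nhds hx)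
  obtain ⟨C₂, hC₂n, hC₂c, hC₂s⟩ := exists_mem_nhds_isClosed_subset (hO₂.mem_nhds hy)
  refine ⟨interior C₁, interior C₂, isOpen_interior, isOpen_interior,
    mem_interior_iff_mem_nhds.mpr hC₁n, mem_interior_iff_mem_nhds.mpr hC₂n, ?_⟩
  have h1 : closure (interior C₁) ⊆ O₁ := (closure_minimal interior_subset hC₁c).trans hC₁s
  have h2 : closure (interior C₂) ⊆ O₂ := (closure_minimal interior_subset hC₂c).trans hC₂s
  refine eq_empty_iff_forall_notMem.mpr fun z hz => ?_
  have : z ∈ O₁ ∩ O₂ := ⟨h1 hz.1, h2 hz.2⟩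
  rw [hd.inter_eq] at this
  exact this

end Stmt1Aux

structure Stmt1State (X : Type*) [TopologicalSpace X] (U : ℕ → Set X) where
  M : Set ℕ
  A : ℕ → Set X
  inf : M.Infinite
  op : ∀ m ∈ M, IsOpen (A m)
  ne : ∀ m ∈ M, (A m).Nonempty
  sub : ∀ m ∈ M, A m ⊆ U m

section Stmt1Aux2

variable {X : Type*} [TopologicalSpace X] [T2Space X] [CompletelyRegularSpace X]

private lemma stmt1_step (U : ℕ → Set X)
    (H : ¬ ∃ u : X, IsOpen ({u} : Set X) ∧ {n | u ∈ U n}.Infinite)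
    (s : Stmt1State X U) :
    ∃ (n₀ : ℕ) (V : Set X) (s' : Stmt1State X U),
      n₀ ∈ s.M ∧ IsOpen V ∧ V.Nonempty ∧ V ⊆ s.A n₀ ∧
      s'.M ⊆ s.M ∧ (∀ m ∈ s'.M, n₀ < m) ∧ (∀ m ∈ s'.M, s'.A m ⊆ s.A m) ∧
      (∀ m ∈ s'.M, s'.A m ∩ V = ∅) := by
  obtain ⟨n₀, hn₀⟩ := s.inf.nonempty
  have hM₁eq : s.M \ Set.Iic n₀ = {m ∈ s.M | n₀ < m} := by
    ext m; simp [not_le, and_comm]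
  have hM₁inf : {m ∈ s.M | n₀ < m}.Infinite := hM₁eq ▸ s.inf.diff (Set.finite_Iic n₀)
  set M₁ : Set ℕ := {m ∈ s.M | n₀ < m} with hM₁def
  by_cases hcase : ∃ V : Set X, IsOpen V ∧ V.Nonempty ∧ V ⊆ s.A n₀ ∧
      {m ∈ M₁ | (s.A m \ closure V).Nonempty}.Infinite
  · obtain ⟨V, hVo, hVne, hVs, hMinf⟩ := hcase
    refine ⟨n₀, V, ⟨{m ∈ M₁ | (s.A m \ closure V).Nonempty}, fun m => s.A m \ closure V,
      hMinf, fun m hm => (s.op m hm.1.1).sdiff isClosed_closure,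
      fun m hm => hm.2, fun m hm => (diff_subset).trans (s.sub m hm.1.1)⟩,
      hn₀, hVo, hVne, hVs, fun m hm => hm.1.1, fun m hm => hm.1.2,
      fun m _ => diff_subset, fun m _ => ?_⟩
    refine eq_empty_iff_forall_notMem.mpr fun z hz => hz.1.2 (subset_closure hz.2)
  · push_neg at hcase
    -- A n₀ is a subsingleton
    have hsing : ∀ x ∈ s.A n₀, ∀ y ∈ s.A n₀, x = y := by
      intro x hx y hy
      by_contra hxy
      obtain ⟨V₁, V₂, h1o, h2o, hx1, hy2, hdc⟩ := stmt1_sep_closure hxy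
      have f1 := hcase (V₁ ∩ s.A n₀) (h1o.inter (s.op n₀ hn₀)) ⟨x, hx1, hx⟩ inter_subset_right
      have f2 := hcase (V₂ ∩ s.A n₀) (h2o.inter (s.op n₀ hn₀)) ⟨y, hy2, hy⟩ inter_subset_right
      obtain ⟨m, hm⟩ := (hM₁inf.diff (f1.union f2)).nonempty
      have hm1 : m ∈ M₁ := hm.1
      have hnot := hm.2
      simp only [Set.mem_union, Set.mem_setOf_eq, not_or, not_and] at hnot
      have hA1 : s.A m ⊆ closure (V₁ ∩ s.A n₀) := by
        have := hnot.1 hm1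
        rwa [Set.not_nonempty_iff_eq_empty, diff_eq_empty] at this
      have hA2 : s.A m ⊆ closure (V₂ ∩ s.A n₀) := by
        have := hnot.2 hm1
        rwa [Set.not_nonempty_iff_eq_empty, diff_eq_empty] at this
      obtain ⟨z, hz⟩ := s.ne m hm1.1
      have : z ∈ closure V₁ ∩ closure V₂ :=
        ⟨closure_mono inter_subset_left (hA1 hz), closure_mono inter_subset_left (hA2 hz)⟩
      rw [hdc] at this
      exact this
    obtain ⟨u, hu⟩ := s.ne n₀ hn₀
    have hAeq : s.A n₀ = {u} := by
      ext z; simp only [Set.mem_singleton_iff]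
      exact ⟨fun hz => hsing z hz u hu, fun hz => hz ▸ hu⟩
    have huo : IsOpen ({u} : Set X) := hAeq ▸ s.op n₀ hn₀
    exfalso
    refine H ⟨u, huo, ?_⟩
    have f := hcase {u} huo ⟨u, rfl⟩ (hAeq ▸ subset_rfl)
    refine ((hM₁inf.diff f).mono fun m hm => ?_)
    have hm1 : m ∈ M₁ := hm.1
    have hnot := hm.2
    simp only [Set.mem_setOf_eq, not_and] at hnot
    have : s.A m ⊆ closure {u} := by
      have := hnot hm1
      rwa [Set.not_nonempty_iff_eq_empty, diff_eq_empty] at this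
    rw [isClosed_singleton.closure_eq] at this
    obtain ⟨z, hz⟩ := s.ne m hm1.1
    have hz' : z = u := this hz
    exact s.sub m hm1.1 (hz' ▸ hz)

end Stmt1Aux2

theorem stmt_1' {X : Type*} [TopologicalSpace X] [T2Space X] [CompletelyRegularSpace X]
    (U : ℕ → Set X) (hopen : ∀ n, IsOpen (U n)) (hne : ∀ n, (U n).Nonempty) :
    ∃ (M : Set ℕ) (V : ℕ → Set X), M.Infinite ∧
      (∀ n ∈ M, IsOpen (V n)) ∧ (∀ n ∈ M, (V n).Nonempty) ∧ (∀ n ∈ M, V n ⊆ U n) ∧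
      ((∀ n ∈ M, ∀ m ∈ M, n ≠ m → V n ∩ V m = ∅) ∨
        (∃ u : X, ∀ n ∈ M, V n = {u})) := by
  classical
  by_cases H : ∃ u : X, IsOpen ({u} : Set X) ∧ {n | u ∈ U n}.Infinite
  · obtain ⟨u, huo, huinf⟩ := H
    exact ⟨{n | u ∈ U n}, fun _ => {u}, huinf, fun n _ => huo, fun n _ => ⟨u, rfl⟩,
      fun n hn => singleton_subset_iff.mpr hn, Or.inr ⟨u, fun n _ => rfl⟩⟩
  · choose nf Vf sf hmem hVo hVne hVsub hMsub hlt hAsub hdisj using stmt1_step U H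
    set s0 : Stmt1State X U :=
      ⟨Set.univ, U, Set.infinite_univ, fun m _ => hopen m, fun m _ => hne m,
        fun m _ => subset_rfl⟩ with hs0
    obtain ⟨seq, hseq0, hseqS⟩ :
        ∃ seq : ℕ → Stmt1State X U, seq 0 = s0 ∧ ∀ k, seq (k + 1) = sf (seq k) :=
      ⟨fun k => Nat.rec s0 (fun _ s => sf s) k, rfl, fun k => rfl⟩
    set N : ℕ → ℕ := fun k => nf (seq k) with hN
    set W : ℕ → Set X := fun k => Vf (seq k) with hW
    have hNmem : ∀ k, N k ∈ (seq k).M := fun k => hmem (seq k)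
    have hMstep : ∀ k, (seq (k + 1)).M ⊆ (seq k).M := fun k => hseqS k ▸ hMsub (seq k)
    have hMmono : ∀ k l, k ≤ l → (seq l).M ⊆ (seq k).M := by
      intro k l hkl
      induction l, hkl using Nat.le_induction with
      | base => exact subset_rfl
      | succ l hkl ih => exact (hMstep l).trans ih
    have hAmono : ∀ k l, k ≤ l → ∀ m ∈ (seq l).M, (seq l).A m ⊆ (seq k).A m := by
      intro k l hkl
      induction l, hkl using Nat.le_induction with
      | base => exact fun m _ => subset_rfl
      | succ l hkl ih =>
        intro m hm
        have h1 : (seq (l + 1)).A m ⊆ (seq l).A m := hseqS l ▸ hAsub (seq l) m (hseqS l ▸ hm)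
        exact h1.trans (ih m (hMstep l hm))
    have hNlt : ∀ k, ∀ m ∈ (seq (k + 1)).M, N k < m := fun k => hseqS k ▸ hlt (seq k)
    have hNmono : StrictMono N :=
      strictMono_nat_of_lt_succ fun k => hNlt k (N (k + 1)) (hNmem (k + 1))
    have hWsubA : ∀ k, W k ⊆ (seq k).A (N k) := fun k => hVsub (seq k)
    have hWsubU : ∀ k, W k ⊆ U (N k) := fun k =>
      (hWsubA k).trans ((seq k).sub (N k) (hNmem k))
    have hWdisj : ∀ k l, k < l → W k ∩ W l = ∅ := by
      intro k l hkl
      have hNl : N l ∈ (seq (k + 1)).M := hMmono (k + 1) l hkl (hNmem l)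
      have hsubA : W l ⊆ (seq (k + 1)).A (N l) :=
        (hWsubA l).trans (hAmono (k + 1) l hkl (N l) (hNmem l))
      have hd : (seq (k + 1)).A (N l) ∩ W k = ∅ :=
        hseqS k ▸ hdisj (seq k) (N l) (hseqS k ▸ hNl)
      refine eq_empty_iff_forall_notMem.mpr fun z hz => ?_
      have : z ∈ (seq (k + 1)).A (N l) ∩ W k := ⟨hsubA hz.2, hz.1⟩
      rw [hd] at this
      exact this
    refine ⟨Set.range N, fun m => W (Function.invFun N m),
      Set.infinite_range_of_injective hNmono.injective, ?_, ?_, ?_, Or.inl ?_⟩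
    · rintro n ⟨k, rfl⟩
      simp only [Function.leftInverse_invFun hNmono.injective k]
      exact hVo (seq k)
    · rintro n ⟨k, rfl⟩
      simp only [Function.leftInverse_invFun hNmono.injective k]
      exact hVne (seq k)
    · rintro n ⟨k, rfl⟩
      simp only [Function.leftInverse_invFun hNmono.injective k]
      exact hWsubU k
    · rintro n ⟨k, rfl⟩ m ⟨l, rfl⟩ hnm
      simp only [Function.leftInverse_invFun hNmono.injective k,
        Function.leftInverse_invFun hNmono.injective l]
      have hkl : k ≠ l := fun h => hnm (h ▸ rfl)
      rcases hkl.lt_or_gt with h | h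
      · exact hWdisj k l h
      · rw [Set.inter_comm]; exact hWdisj l k h

/-- Refining a sequence of nonempty open sets to a disjoint family
or to a constant singleton family along an infinite index set. -/
theorem stmt_1 {X : Type*} [TopologicalSpace X] [T2Space X] [CompletelyRegularSpace X]
    (U : ℕ → Set X) (hopen : ∀ n, IsOpen (U n)) (hne : ∀ n, (U n).Nonempty) :
    ∃ (M : Set ℕ) (V : ℕ → Set X), M.Infinite ∧
      (∀ n ∈ M, IsOpen (V n)) ∧ (∀ n ∈ M, (V n).Nonempty) ∧ (∀ n ∈ M, V n ⊆ U n) ∧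
      ((∀ n ∈ M, ∀ m ∈ M, n ≠ m → V n ∩ V m = ∅) ∨
        (∃ u : X, ∀ n ∈ M, V n = {u})) := by
  exact stmt_1' U hopen hne
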